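/- Let P be a finite thin graded poset with a proper zipper (x,y,z). Then the zipped poset P' is thin, i.e., every rank-2 interval of P' has exactly two elements of intermediate rank. -/

import Mathlib

/-- The underlying set of the zipped poset `P' = (P − {x,y,z}) ∪ {xy}`:
elements of `P` other than `x`, `y`, `z`, together with one new element `xy`
(represented by `Sum.inr ()`). -/
def ZipCarrier (α : Type*) (x y z : α) : Type _ :=
  {p : α // p ≠ x ∧ p ≠ y ∧ p ≠ z} ⊕ Unit

/-- The order relation `⪯` on the zipped poset: `a ⪯ b` if `a ≤ b` in `P`;
`xy ⪯ a` if `x ≤ a` or `y ≤ a`; `a ⪯ xy` if `a ≤ x`; and `xy ⪯ xy`. -/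
def zipLE {α : Type*} [PartialOrder α] (x y z : α) :
    ZipCarrier α x y z → ZipCarrier α x y z → Prop
  | .inl a, .inl b => a.val ≤ b.val
  | .inr _, .inl b => x ≤ b.val ∨ y ≤ b.val
  | .inl a, .inr _ => a.val ≤ x
  | .inr _, .inr _ => True

/-- `(x,y,z)` is a zipper in `P`: `z` covers `x` and `y` and covers no other element,
`z = x ∨ y` (the join), and the sets of elements strictly below `x` and `y` agree. -/
def IsZipper {α : Type*} [PartialOrder α] (x y z : α) : Prop :=
  x ≠ y ∧ x ≠ z ∧ y ≠ z ∧
  (x ⋖ z) ∧ (y ⋖ z) ∧ (∀ w : α, w ⋖ z → w = x ∨ w = y) ∧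
  IsLUB {x, y} z ∧
  (∀ a : α, a < x ↔ a < y)

open scoped Classical in
/-- `μ` is the Möbius function of the relation `r`:
`∑_{c : r a c ∧ r c b} μ(a,c) = δ_{a,b}` for all `a ≤ b`. -/
noncomputable def IsMoebius {α : Type*} (r : α → α → Prop) (μ : α → α → ℤ) : Prop :=
  ∀ a b : α, r a b →
    (∑ᶠ c ∈ {c : α | r a c ∧ r c b}, μ a c) = if a = b then 1 else 0

/-- The rank function of the zipped poset: old elements keep their rank, and
the new element `xy` has the common rank of `x` and `y`. -/
def zipRank {α : Type*} (x y z : α) (rk : α → ℕ) : ZipCarrier α x y z → ℕ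
  | .inl a => rk a.val
  | .inr _ => rk x

section Aux
variable {α : Type*} [PartialOrder α] [Finite α] {rk : α → ℕ} {x y z : α}

set_option linter.unusedSectionVars false in
@[simp] lemma zc_inl_eq_inl {p q : {p : α // p ≠ x ∧ p ≠ y ∧ p ≠ z}} :
    @Eq (ZipCarrier α x y z) (Sum.inl p) (Sum.inl q) ↔ p.val = q.val := by
  constructor
  · intro h; cases Sum.inl.inj h; rfl
  · intro h; cases Subtype.ext h; rfl

set_option linter.unusedSectionVars false in
@[simp] lemma zc_inl_eq_inr {p : {p : α // p ≠ x ∧ p ≠ y ∧ p ≠ z}} {u : Unit} :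
    @Eq (ZipCarrier α x y z) (Sum.inl p) (Sum.inr u) ↔ False :=
  ⟨fun h => Sum.inl_ne_inr h, False.elim⟩

set_option linter.unusedSectionVars false in
@[simp] lemma zc_inr_eq_inl {p : {p : α // p ≠ x ∧ p ≠ y ∧ p ≠ z}} {u : Unit} :
    @Eq (ZipCarrier α x y z) (Sum.inr u) (Sum.inl p) ↔ False :=
  ⟨fun h => Sum.inr_ne_inl h, False.elim⟩

set_option linter.unusedSectionVars false in
@[simp] lemma zc_inr_eq_inr {u v : Unit} :
    @Eq (ZipCarrier α x y z) (Sum.inr u) (Sum.inr v) ↔ True :=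
  ⟨fun _ => trivial, fun _ => by cases u; cases v; rfl⟩

lemma rk_lt_of_lt' (hrkcov : ∀ a b : α, a ⋖ b → rk b = rk a + 1) :
    ∀ a b : α, a < b → rk a < rk b := by
  haveI : IsStronglyAtomic α := IsStronglyAtomic.of_wellFounded_lt wellFounded_lt
  intro a
  induction a using WellFounded.induction (wellFounded_gt (α := α)) with
  | _ a IH =>
  intro b hab
  obtain ⟨c, hc, hcb⟩ := hab.exists_covby_le
  rcases eq_or_lt_of_le hcb with rfl | hlt
  · have := hrkcov _ _ hc; omega
  · have h1 := hrkcov _ _ hc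
    have h2 := IH c hc.lt b hlt
    omega

lemma rk_eq_of_le (hrkcov : ∀ a b : α, a ⋖ b → rk b = rk a + 1)
    {a b : α} (hab : a ≤ b) (hr : rk b ≤ rk a) : a = b := by
  rcases hab.lt_or_eq with h | h
  · exact absurd (rk_lt_of_lt' hrkcov _ _ h) (by omega)
  · exact h

lemma pair_other {β : Type*} {s : Set β} {m1 m2 x : β} (h : s = {m1, m2}) (hne : m1 ≠ m2)
    (hx : x ∈ s) : ∃ w, w ≠ x ∧ s = {x, w} := by
  subst h
  rcases hx with rfl | rfl
  · exact ⟨m2, hne.symm, rfl⟩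
  · exact ⟨m1, hne, by rw [Set.pair_comm]⟩

lemma le_of_lt_covs (hcov : ∀ w : α, w ⋖ z → w = x ∨ w = y) {a : α} (haz : a < z) :
    a ≤ x ∨ a ≤ y := by
  haveI : IsStronglyCoatomic α :=
    isStronglyAtomic_dual_iff_is_stronglyCoatomic.mp
      (IsStronglyAtomic.of_wellFounded_lt (wellFounded_lt (α := αᵒᵈ)))
  obtain ⟨c, hac, hcz⟩ := haz.exists_le_covby
  rcases hcov c hcz with rfl | rfl
  · exact Or.inl hac
  · exact Or.inr hac

end Aux

attribute [reducible] ZipCarrier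

/-- zipping a proper zipper in a finite thin graded poset yields a thin
poset: every rank-2 interval of `P'` has exactly two elements of intermediate rank. -/
theorem zipped_thin {α : Type*} [PartialOrder α] [BoundedOrder α] [Finite α]
    (rk : α → ℕ) (hrk0 : rk (⊥ : α) = 0)
    (hrkcov : ∀ a b : α, a ⋖ b → rk b = rk a + 1)
    (hthin : ∀ a b : α, a ≤ b → rk b = rk a + 2 → {c : α | a < c ∧ c < b}.ncard = 2)
    (x y z : α) (hzip : IsZipper x y z) (hproper : z ≠ ⊤) :
    ∀ A B : ZipCarrier α x y z, zipLE x y z A B →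
      zipRank x y z rk B = zipRank x y z rk A + 2 →
      {C : ZipCarrier α x y z |
        zipLE x y z A C ∧ zipLE x y z C B ∧ C ≠ A ∧ C ≠ B}.ncard = 2 := by
  classical
  obtain ⟨hxy, hxz, hyz, hxcz, hycz, hcov, hlub, hD⟩ := hzip
  have rmono := rk_lt_of_lt' hrkcov
  have rkzx : rk z = rk x + 1 := hrkcov _ _ hxcz
  have rkzy : rk z = rk y + 1 := hrkcov _ _ hycz
  have hnxy : ¬ x < y := fun h => by have := rmono _ _ h; omega
  have hnyx : ¬ y < x := fun h => by have := rmono _ _ h; omega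
  intro A B hAB hrk
  rcases A with ⟨a, ha1, ha2, ha3⟩ | u
  · rcases B with ⟨b, hb1, hb2, hb3⟩ | v
    · -- Case 1 : A = inl a, B = inl b
      simp only [zipLE] at hAB
      simp only [zipRank] at hrk
      have hab : a < b := lt_of_le_of_ne hAB (by rintro rfl; omega)
      obtain ⟨m1, m2, hm12, hMeq⟩ := Set.ncard_eq_two.mp (hthin a b hAB hrk)
      have hzM : ¬ (a < z ∧ z < b) := by
        rintro ⟨haz, hzb⟩
        have hb' := rmono _ _ hzb
        rcases le_of_lt_covs hcov haz with hax | hay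
        · exact ha1 (rk_eq_of_le hrkcov hax (by omega))
        · exact ha2 (rk_eq_of_le hrkcov hay (by omega))
      have hnotboth : ¬ ((a < x ∧ x < b) ∧ (a < y ∧ y < b)) := by
        rintro ⟨⟨hax, hxb⟩, ⟨hay, hyb⟩⟩
        have hzb : z ≤ b := hlub.2 (by rintro w (rfl | rfl); exacts [hxb.le, hyb.le])
        have h1 := rmono _ _ hax
        have h2 := rmono _ _ hxb
        exact hb3 (rk_eq_of_le hrkcov hzb (by omega)).symm
      by_cases hxM : a < x ∧ x < b
      · -- x is a midpoint; y is not
        have hyM : ¬ (a < y ∧ y < b) := fun h => hnotboth ⟨hxM, h⟩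
        have hynb : ¬ y < b := fun h => hyM ⟨(hD a).mp hxM.1, h⟩
        obtain ⟨w, hwx, hseq⟩ := pair_other hMeq hm12 (show x ∈ {c | a < c ∧ c < b} from hxM)
        have hwM : a < w ∧ w < b := by
          have : w ∈ {c | a < c ∧ c < b} := by rw [hseq]; exact Or.inr rfl
          exact this
        have hwy : w ≠ y := by rintro rfl; exact hyM hwM
        have hwz : w ≠ z := by rintro rfl; exact hzM hwM
        refine (Set.ncard_eq_two (α := ZipCarrier α x y z)).mpr ⟨Sum.inl ⟨w, hwx, hwy, hwz⟩, Sum.inr (), by simp, ?_⟩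
        ext C
        rcases C with ⟨c, hc1, hc2, hc3⟩ | u
        · simp only [Set.mem_ofPred_eq, Set.mem_insert_iff, Set.mem_singleton_iff, zipLE,
            zc_inl_eq_inl, zc_inl_eq_inr, zc_inr_eq_inl, zc_inr_eq_inr, or_false, ne_eq]
          constructor
          · rintro ⟨h1, h2, h3, h4⟩
            have hcM : c ∈ ({x, w} : Set α) := by
              rw [← hseq]
              exact ⟨lt_of_le_of_ne h1 (fun h => h3 h.symm), lt_of_le_of_ne h2 h4⟩
            rcases hcM with rfl | rfl
            · exact absurd rfl hc1
            · rfl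
          · rintro rfl
            exact ⟨hwM.1.le, hwM.2.le, by rintro rfl; exact lt_irrefl _ hwM.1,
              by rintro rfl; exact lt_irrefl _ hwM.2⟩
        · cases u
          simp only [Set.mem_ofPred_eq, Set.mem_insert_iff, Set.mem_singleton_iff, zipLE,
            zc_inl_eq_inl, zc_inl_eq_inr, zc_inr_eq_inl, zc_inr_eq_inr, ne_eq, not_false_eq_true, and_true, true_and, or_true, iff_true]
          exact ⟨hxM.1.le, Or.inl hxM.2.le⟩
      · by_cases hyM : a < y ∧ y < b
        · -- y is a midpoint; x is not
          have hxnb : ¬ x < b := fun h => hxM ⟨(hD a).mpr hyM.1, h⟩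
          obtain ⟨w, hwy, hseq⟩ := pair_other hMeq hm12 (show y ∈ {c | a < c ∧ c < b} from hyM)
          have hwM : a < w ∧ w < b := by
            have : w ∈ {c | a < c ∧ c < b} := by rw [hseq]; exact Or.inr rfl
            exact this
          have hwx : w ≠ x := by rintro rfl; exact hxM hwM
          have hwz : w ≠ z := by rintro rfl; exact hzM hwM
          refine (Set.ncard_eq_two (α := ZipCarrier α x y z)).mpr ⟨Sum.inl ⟨w, hwx, hwy, hwz⟩, Sum.inr (), by simp, ?_⟩
          ext C
          rcases C with ⟨c, hc1, hc2, hc3⟩ | u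
          · simp only [Set.mem_ofPred_eq, Set.mem_insert_iff, Set.mem_singleton_iff, zipLE,
              zc_inl_eq_inl, zc_inl_eq_inr, zc_inr_eq_inl, zc_inr_eq_inr, or_false, ne_eq]
            constructor
            · rintro ⟨h1, h2, h3, h4⟩
              have hcM : c ∈ ({y, w} : Set α) := by
                rw [← hseq]
                exact ⟨lt_of_le_of_ne h1 (fun h => h3 h.symm), lt_of_le_of_ne h2 h4⟩
              rcases hcM with rfl | rfl
              · exact absurd rfl hc2
              · rfl
            · rintro rfl
              exact ⟨hwM.1.le, hwM.2.le, by rintro rfl; exact lt_irrefl _ hwM.1,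
                by rintro rfl; exact lt_irrefl _ hwM.2⟩
          · cases u
            simp only [Set.mem_ofPred_eq, Set.mem_insert_iff, Set.mem_singleton_iff, zipLE,
              zc_inl_eq_inl, zc_inl_eq_inr, zc_inr_eq_inl, zc_inr_eq_inr, ne_eq, not_false_eq_true, and_true, true_and, or_true, iff_true]
            exact ⟨((hD a).mpr hyM.1).le, Or.inr hyM.2.le⟩
        · -- neither x nor y is a midpoint
          have hm1M : m1 ∈ {c | a < c ∧ c < b} := by rw [hMeq]; exact Or.inl rfl
          have hm2M : m2 ∈ {c | a < c ∧ c < b} := by rw [hMeq]; exact Or.inr rfl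
          have hkey : ∀ c, c ∈ ({m1, m2} : Set α) → c ≠ x ∧ c ≠ y ∧ c ≠ z := by
            intro c hc
            have hcM : c ∈ {c | a < c ∧ c < b} := by rw [hMeq]; exact hc
            exact ⟨by rintro rfl; exact hxM hcM, by rintro rfl; exact hyM hcM,
              by rintro rfl; exact hzM hcM⟩
          obtain ⟨k1x, k1y, k1z⟩ := hkey m1 (Or.inl rfl)
          obtain ⟨k2x, k2y, k2z⟩ := hkey m2 (Or.inr rfl)
          refine (Set.ncard_eq_two (α := ZipCarrier α x y z)).mpr ⟨Sum.inl ⟨m1, k1x, k1y, k1z⟩, Sum.inl ⟨m2, k2x, k2y, k2z⟩,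
            by simp [hm12], ?_⟩
          ext C
          rcases C with ⟨c, hc1, hc2, hc3⟩ | u
          · simp only [Set.mem_ofPred_eq, Set.mem_insert_iff, Set.mem_singleton_iff, zipLE,
              zc_inl_eq_inl, zc_inl_eq_inr, zc_inr_eq_inl, zc_inr_eq_inr, ne_eq]
            constructor
            · rintro ⟨h1, h2, h3, h4⟩
              have hcM : c ∈ ({m1, m2} : Set α) := by
                rw [← hMeq]
                exact ⟨lt_of_le_of_ne h1 (fun h => h3 (by simp [h.symm])),
                  lt_of_le_of_ne h2 (fun h => h4 (by simp [h]))⟩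
              exact hcM
            · rintro (rfl | rfl)
              · exact ⟨hm1M.1.le, hm1M.2.le, by rintro rfl; exact lt_irrefl _ hm1M.1,
                  by rintro rfl; exact lt_irrefl _ hm1M.2⟩
              · exact ⟨hm2M.1.le, hm2M.2.le, by rintro rfl; exact lt_irrefl _ hm2M.1,
                  by rintro rfl; exact lt_irrefl _ hm2M.2⟩
          · cases u
            simp only [Set.mem_ofPred_eq, Set.mem_insert_iff, Set.mem_singleton_iff, zipLE,
              zc_inl_eq_inl, zc_inl_eq_inr, zc_inr_eq_inl, zc_inr_eq_inr, ne_eq, not_false_eq_true, and_true, true_and, or_false, iff_false,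
              not_and, not_or]
            intro hax
            have hax' : a < x := lt_of_le_of_ne hax ha1
            constructor
            · intro hxb; exact hxM ⟨hax', lt_of_le_of_ne hxb (fun h => hb1 h.symm)⟩
            · intro hyb; exact hyM ⟨(hD a).mp hax', lt_of_le_of_ne hyb (fun h => hb2 h.symm)⟩
    · -- Case 2 : A = inl a, B = xy
      cases v
      simp only [zipLE] at hAB
      simp only [zipRank] at hrk
      have hax : a < x := lt_of_le_of_ne hAB ha1
      obtain ⟨m1, m2, hm12, hMeq⟩ := Set.ncard_eq_two.mp (hthin a x hAB hrk)
      have hm1M : m1 ∈ {c | a < c ∧ c < x} := by rw [hMeq]; exact Or.inl rfl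
      have hm2M : m2 ∈ {c | a < c ∧ c < x} := by rw [hMeq]; exact Or.inr rfl
      have hkey : ∀ c, c ∈ ({m1, m2} : Set α) → c ≠ x ∧ c ≠ y ∧ c ≠ z := by
        intro c hc
        have hcM : c ∈ {c | a < c ∧ c < x} := by rw [hMeq]; exact hc
        refine ⟨fun h => lt_irrefl x (h ▸ hcM.2), by rintro rfl; exact hnyx hcM.2,
          by rintro rfl; have := rmono _ _ hcM.2; omega⟩
      obtain ⟨k1x, k1y, k1z⟩ := hkey m1 (Or.inl rfl)
      obtain ⟨k2x, k2y, k2z⟩ := hkey m2 (Or.inr rfl)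
      refine (Set.ncard_eq_two (α := ZipCarrier α x y z)).mpr ⟨Sum.inl ⟨m1, k1x, k1y, k1z⟩, Sum.inl ⟨m2, k2x, k2y, k2z⟩,
        by simp [hm12], ?_⟩
      ext C
      rcases C with ⟨c, hc1, hc2, hc3⟩ | u
      · simp only [Set.mem_ofPred_eq, Set.mem_insert_iff, Set.mem_singleton_iff, zipLE,
          zc_inl_eq_inl, zc_inl_eq_inr, zc_inr_eq_inl, zc_inr_eq_inr, ne_eq, not_false_eq_true, and_true]
        constructor
        · rintro ⟨h1, h2, h3⟩
          have hcM : c ∈ ({m1, m2} : Set α) := by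
            rw [← hMeq]
            exact ⟨lt_of_le_of_ne h1 (fun h => h3 (by simp [h.symm])), lt_of_le_of_ne h2 hc1⟩
          exact hcM
        · rintro (rfl | rfl)
          · exact ⟨hm1M.1.le, hm1M.2.le, by rintro rfl; exact lt_irrefl _ hm1M.1⟩
          · exact ⟨hm2M.1.le, hm2M.2.le, by rintro rfl; exact lt_irrefl _ hm2M.1⟩
      · simp [zipLE]
  · rcases B with ⟨b, hb1, hb2, hb3⟩ | v
    · -- Case 3 : A = xy, B = inl b
      cases u
      simp only [zipLE] at hAB
      simp only [zipRank] at hrk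
      by_cases hxb : x ≤ b
      · by_cases hyb : y ≤ b
        · -- both x ≤ b and y ≤ b
          have hxb' : x < b := lt_of_le_of_ne hxb (fun h => hb1 h.symm)
          have hyb' : y < b := lt_of_le_of_ne hyb (fun h => hb2 h.symm)
          have hzb : z < b := lt_of_le_of_ne
            (hlub.2 (by rintro w (rfl | rfl); exacts [hxb, hyb])) (fun h => hb3 h.symm)
          obtain ⟨m1, m2, hm12, hMxeq⟩ := Set.ncard_eq_two.mp (hthin x b hxb hrk)
          obtain ⟨w, hwz, hMx⟩ := pair_other hMxeq hm12
            (show z ∈ {c | x < c ∧ c < b} from ⟨hxcz.lt, hzb⟩)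
          obtain ⟨n1, n2, hn12, hMyeq⟩ := Set.ncard_eq_two.mp (hthin y b hyb (by omega))
          obtain ⟨w', hwz', hMy⟩ := pair_other hMyeq hn12
            (show z ∈ {c | y < c ∧ c < b} from ⟨hycz.lt, hzb⟩)
          have hwMx : x < w ∧ w < b := by
            have h : w ∈ {c | x < c ∧ c < b} := by rw [hMx]; exact Or.inr rfl
            exact h
          have hwMy : y < w' ∧ w' < b := by
            have h : w' ∈ {c | y < c ∧ c < b} := by rw [hMy]; exact Or.inr rfl
            exact h
          have hww' : w ≠ w' := by
            rintro rfl
            have hzw : z ≤ w := hlub.2 (by rintro v (rfl | rfl); exacts [hwMx.1.le, hwMy.1.le])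
            have h1 := rmono _ _ hwMx.1
            have h2 := rmono _ _ hwMx.2
            exact hwz (rk_eq_of_le hrkcov hzw (by omega)).symm
          have kwx : w ≠ x := by rintro rfl; exact lt_irrefl _ hwMx.1
          have kwy : w ≠ y := by rintro rfl; exact hnxy hwMx.1
          have kw'y : w' ≠ y := by rintro rfl; exact lt_irrefl _ hwMy.1
          have kw'x : w' ≠ x := by rintro rfl; exact hnyx hwMy.1
          refine (Set.ncard_eq_two (α := ZipCarrier α x y z)).mpr ⟨Sum.inl ⟨w, kwx, kwy, hwz⟩,
            Sum.inl ⟨w', kw'x, kw'y, hwz'⟩, by simp [hww'], ?_⟩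
          ext C
          rcases C with ⟨c, hc1, hc2, hc3⟩ | u
          · simp only [Set.mem_ofPred_eq, Set.mem_insert_iff, Set.mem_singleton_iff, zipLE,
              zc_inl_eq_inl, zc_inl_eq_inr, zc_inr_eq_inl, zc_inr_eq_inr, ne_eq, not_false_eq_true,
              true_and, and_true]
            constructor
            · rintro ⟨h1, h2, h3⟩
              have hcb : c < b := lt_of_le_of_ne h2 (fun h => h3 (by simp [h]))
              rcases h1 with h1 | h1
              · have hc : c ∈ ({z, w} : Set α) := by
                  rw [← hMx]; exact ⟨lt_of_le_of_ne h1 (Ne.symm hc1), hcb⟩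
                rcases hc with rfl | rfl
                · exact absurd rfl hc3
                · exact Or.inl rfl
              · have hc : c ∈ ({z, w'} : Set α) := by
                  rw [← hMy]; exact ⟨lt_of_le_of_ne h1 (Ne.symm hc2), hcb⟩
                rcases hc with rfl | rfl
                · exact absurd rfl hc3
                · exact Or.inr rfl
            · rintro (rfl | rfl)
              · exact ⟨Or.inl hwMx.1.le, hwMx.2.le,
                  by rintro rfl; exact lt_irrefl _ hwMx.2⟩
              · exact ⟨Or.inr hwMy.1.le, hwMy.2.le,
                  by rintro rfl; exact lt_irrefl _ hwMy.2⟩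
          · cases u
            simp [zipLE]
        · -- only x ≤ b
          have hxb' : x < b := lt_of_le_of_ne hxb (fun h => hb1 h.symm)
          obtain ⟨m1, m2, hm12, hMeq⟩ := Set.ncard_eq_two.mp (hthin x b hxb hrk)
          have hm1M : m1 ∈ {c | x < c ∧ c < b} := by rw [hMeq]; exact Or.inl rfl
          have hm2M : m2 ∈ {c | x < c ∧ c < b} := by rw [hMeq]; exact Or.inr rfl
          have hkey : ∀ c, c ∈ ({m1, m2} : Set α) → c ≠ x ∧ c ≠ y ∧ c ≠ z := by
            intro c hc
            have hcM : c ∈ {c | x < c ∧ c < b} := by rw [hMeq]; exact hc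
            exact ⟨by rintro rfl; exact lt_irrefl _ hcM.1,
              by rintro rfl; exact hnxy hcM.1,
              by rintro rfl; exact hyb (hycz.lt.le.trans hcM.2.le)⟩
          obtain ⟨k1x, k1y, k1z⟩ := hkey m1 (Or.inl rfl)
          obtain ⟨k2x, k2y, k2z⟩ := hkey m2 (Or.inr rfl)
          refine (Set.ncard_eq_two (α := ZipCarrier α x y z)).mpr ⟨Sum.inl ⟨m1, k1x, k1y, k1z⟩,
            Sum.inl ⟨m2, k2x, k2y, k2z⟩, by simp [hm12], ?_⟩
          ext C
          rcases C with ⟨c, hc1, hc2, hc3⟩ | u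
          · simp only [Set.mem_ofPred_eq, Set.mem_insert_iff, Set.mem_singleton_iff, zipLE,
              zc_inl_eq_inl, zc_inl_eq_inr, zc_inr_eq_inl, zc_inr_eq_inr, ne_eq, not_false_eq_true,
              true_and, and_true]
            constructor
            · rintro ⟨h1, h2, h3⟩
              have hcb : c < b := lt_of_le_of_ne h2 (fun h => h3 (by simp [h]))
              rcases h1 with h1 | h1
              · have hc : c ∈ ({m1, m2} : Set α) := by
                  rw [← hMeq]; exact ⟨lt_of_le_of_ne h1 (Ne.symm hc1), hcb⟩
                exact hc
              · exact absurd (h1.trans h2) hyb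
            · rintro (rfl | rfl)
              · exact ⟨Or.inl hm1M.1.le, hm1M.2.le,
                  by rintro rfl; exact lt_irrefl _ hm1M.2⟩
              · exact ⟨Or.inl hm2M.1.le, hm2M.2.le,
                  by rintro rfl; exact lt_irrefl _ hm2M.2⟩
          · cases u
            simp [zipLE]
      · by_cases hyb : y ≤ b
        · -- only y ≤ b
          have hyb' : y < b := lt_of_le_of_ne hyb (fun h => hb2 h.symm)
          obtain ⟨m1, m2, hm12, hMeq⟩ := Set.ncard_eq_two.mp (hthin y b hyb (by omega))
          have hm1M : m1 ∈ {c | y < c ∧ c < b} := by rw [hMeq]; exact Or.inl rfl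
          have hm2M : m2 ∈ {c | y < c ∧ c < b} := by rw [hMeq]; exact Or.inr rfl
          have hkey : ∀ c, c ∈ ({m1, m2} : Set α) → c ≠ x ∧ c ≠ y ∧ c ≠ z := by
            intro c hc
            have hcM : c ∈ {c | y < c ∧ c < b} := by rw [hMeq]; exact hc
            exact ⟨by rintro rfl; exact hnyx hcM.1,
              by rintro rfl; exact lt_irrefl _ hcM.1,
              by rintro rfl; exact hxb (hxcz.lt.le.trans hcM.2.le)⟩
          obtain ⟨k1x, k1y, k1z⟩ := hkey m1 (Or.inl rfl)
          obtain ⟨k2x, k2y, k2z⟩ := hkey m2 (Or.inr rfl)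
          refine (Set.ncard_eq_two (α := ZipCarrier α x y z)).mpr ⟨Sum.inl ⟨m1, k1x, k1y, k1z⟩,
            Sum.inl ⟨m2, k2x, k2y, k2z⟩, by simp [hm12], ?_⟩
          ext C
          rcases C with ⟨c, hc1, hc2, hc3⟩ | u
          · simp only [Set.mem_ofPred_eq, Set.mem_insert_iff, Set.mem_singleton_iff, zipLE,
              zc_inl_eq_inl, zc_inl_eq_inr, zc_inr_eq_inl, zc_inr_eq_inr, ne_eq, not_false_eq_true,
              true_and, and_true]
            constructor
            · rintro ⟨h1, h2, h3⟩
              have hcb : c < b := lt_of_le_of_ne h2 (fun h => h3 (by simp [h]))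
              rcases h1 with h1 | h1
              · exact absurd (h1.trans h2) hxb
              · have hc : c ∈ ({m1, m2} : Set α) := by
                  rw [← hMeq]; exact ⟨lt_of_le_of_ne h1 (Ne.symm hc2), hcb⟩
                exact hc
            · rintro (rfl | rfl)
              · exact ⟨Or.inr hm1M.1.le, hm1M.2.le,
                  by rintro rfl; exact lt_irrefl _ hm1M.2⟩
              · exact ⟨Or.inr hm2M.1.le, hm2M.2.le,
                  by rintro rfl; exact lt_irrefl _ hm2M.2⟩
          · cases u
            simp [zipLE]
        · rcases hAB with h | h
          · exact absurd h hxb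
          · exact absurd h hyb
    · -- Case 4 : A = B = xy
      cases u; cases v
      simp only [zipRank] at hrk
      omega
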